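/- The operator ∂_ℓ defined by ∂_ℓ g(x₀,…,x_{ℓ-1}) = Σᵢ (-1)ⁱ ∫_X (∏_j √K(t,x_j)) g(x₀,…,x_{i-1},t,xᵢ,…,x_{ℓ-1}) dμ(t) is the adjoint of δ_{ℓ-1}: for all f ∈ L²(X^ℓ) and g ∈ L²(X^{ℓ+1}), ⟨δ_{ℓ-1}f, g⟩ = ⟨f, ∂_ℓ g⟩. -/

import Mathlib

open MeasureTheory

/-- The Alexander–Spanier coboundary operator with kernel weights
`∏_{j≠i} √K(xᵢ,xⱼ)`. -/
noncomputable def coboundary {X : Type*} (K : X → X → ℝ) (n : ℕ)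
    (f : (Fin n → X) → ℝ) : (Fin (n + 1) → X) → ℝ :=
  fun x => ∑ i : Fin (n + 1),
    (-1 : ℝ) ^ (i : ℕ) *
      (∏ j ∈ Finset.univ.erase i, Real.sqrt (K (x i) (x j))) *
        f (x ∘ i.succAbove)

/-- The boundary operator
`∂_ℓ g(x₀,…,x_{ℓ-1}) = Σᵢ (-1)ⁱ ∫_X (∏_j √K(t,x_j)) g(x₀,…,x_{i-1},t,xᵢ,…,x_{ℓ-1}) dμ(t)`. -/
noncomputable def kboundary {X : Type*} [MeasurableSpace X] (μ : Measure X)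
    (K : X → X → ℝ) (n : ℕ) (g : (Fin (n + 1) → X) → ℝ) : (Fin n → X) → ℝ :=
  fun x => ∑ i : Fin (n + 1),
    (-1 : ℝ) ^ (i : ℕ) *
      ∫ t, (∏ j, Real.sqrt (K t (x j))) * g (i.insertNth t x) ∂μ

/-- `∂_ℓ` is the adjoint of `δ_{ℓ-1}`:
`⟨δ_{ℓ-1} f, g⟩_{L²(X^{ℓ+1})} = ⟨f, ∂_ℓ g⟩_{L²(X^ℓ)}`. -/
private lemma l2_mul_integrable {α : Type*} [MeasurableSpace α] {μ : Measure α} {f g : α → ℝ}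
    (hf : MemLp f 2 μ) (hg : MemLp g 2 μ) : Integrable (fun x => f x * g x) μ := by
  have h : Integrable (fun x => (f x ^ 2 + g x ^ 2) / 2) μ :=
    (hf.integrable_sq.add hg.integrable_sq).div_const 2
  refine Integrable.mono' h (hf.1.mul hg.1) ?_
  filter_upwards with x
  rw [Real.norm_eq_abs, abs_mul]
  nlinarith [sq_nonneg (|f x| - |g x|), sq_abs (f x), sq_abs (g x), abs_nonneg (f x),
    abs_nonneg (g x)]

private lemma prod_erase_succAbove {n : ℕ} (i : Fin (n + 1)) (h : Fin (n + 1) → ℝ) :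
    ∏ j ∈ Finset.univ.erase i, h j = ∏ j : Fin n, h (i.succAbove j) := by
  rw [show Finset.univ.erase i =
      Finset.univ.map ⟨i.succAbove, i.succAbove_right_injective⟩ by
    ext j
    simp only [Finset.mem_erase, Finset.mem_univ, and_true, Finset.mem_map,
      Function.Embedding.coeFn_mk]
    constructor
    · intro hj
      exact (Fin.exists_succAbove_eq hj).imp (fun k hk => ⟨trivial, hk⟩)
    · rintro ⟨k, -, rfl⟩
      exact Fin.succAbove_ne i k]
  rw [Finset.prod_map]
  rfl

theorem kboundary_adjoint_coboundary
    {X : Type*} [MeasurableSpace X] (μ : Measure X) [IsProbabilityMeasure μ]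
    (K : X → X → ℝ) (hKmeas : Measurable (Function.uncurry K))
    (hKnonneg : ∀ x y, 0 ≤ K x y) (hKsymm : ∀ x y, K x y = K y x)
    (C : ℝ) (hKC : ∀ x y, K x y ≤ C) (n : ℕ)
    (f : (Fin n → X) → ℝ) (g : (Fin (n + 1) → X) → ℝ)
    (hf : MemLp f 2 (Measure.pi fun _ : Fin n => μ))
    (hg : MemLp g 2 (Measure.pi fun _ : Fin (n + 1) => μ)) :
    ∫ x, coboundary K n f x * g x ∂(Measure.pi fun _ : Fin (n + 1) => μ) =
      ∫ x, f x * kboundary μ K n g x ∂(Measure.pi fun _ : Fin n => μ) := by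
  simp only [coboundary, kboundary]
  classical
  set μn : Measure (Fin n → X) := Measure.pi fun _ => μ with hμn
  set μn1 : Measure (Fin (n + 1) → X) := Measure.pi fun _ => μ with hμn1
  set c : ℝ := Real.sqrt (max C 0) with hc
  have hsqrt_le : ∀ a b : X, Real.sqrt (K a b) ≤ c := fun a b =>
    Real.sqrt_le_sqrt (le_max_of_le_left (hKC a b))
  set e : ∀ i : Fin (n + 1), ((Fin (n + 1) → X) ≃ᵐ X × (Fin n → X)) :=
    fun i => MeasurableEquiv.piFinSuccAbove (fun _ : Fin (n + 1) => X) i with he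
  have mp : ∀ i : Fin (n + 1), MeasurePreserving (e i) μn1 (μ.prod μn) := fun i =>
    measurePreserving_piFinSuccAbove (fun _ : Fin (n + 1) => μ) i
  have mpsnd : MeasurePreserving (Prod.snd : X × (Fin n → X) → (Fin n → X)) (μ.prod μn) μn :=
    ⟨measurable_snd, Measure.snd_prod⟩
  have hfi : ∀ i : Fin (n + 1), MemLp (fun x => f (x ∘ i.succAbove)) 2 μn1 := fun i =>
    hf.comp_measurePreserving (mpsnd.comp (mp i))
  set w : Fin (n + 1) → (Fin (n + 1) → X) → ℝ :=
    fun i x => ∏ j ∈ Finset.univ.erase i, Real.sqrt (K (x i) (x j)) with hw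
  have hwmeas : ∀ i, Measurable (w i) := by
    intro i
    refine Finset.measurable_prod _ fun j _ => ?_
    have h1 : Measurable (Function.uncurry K ∘ fun x : Fin (n + 1) → X => (x i, x j)) :=
      hKmeas.comp ((measurable_pi_apply i).prodMk (measurable_pi_apply j))
    exact Measurable.sqrt h1
  have hwle : ∀ i x, |w i x| ≤ c ^ n := by
    intro i x
    rw [abs_of_nonneg (Finset.prod_nonneg fun j _ => Real.sqrt_nonneg _)]
    calc w i x ≤ ∏ _j ∈ Finset.univ.erase i, c :=
          Finset.prod_le_prod (fun j _ => Real.sqrt_nonneg _) (fun j _ => hsqrt_le _ _)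
      _ = c ^ n := by
          rw [Finset.prod_const, Finset.card_erase_of_mem (Finset.mem_univ i),
            Finset.card_univ, Fintype.card_fin, Nat.add_sub_cancel]
  set T : Fin (n + 1) → (Fin (n + 1) → X) → ℝ :=
    fun i x => (-1 : ℝ) ^ (i : ℕ) * w i x * f (x ∘ i.succAbove) * g x with hT
  have hTint : ∀ i, Integrable (T i) μn1 := by
    intro i
    have hmul : Integrable (fun x => f (x ∘ i.succAbove) * g x) μn1 :=
      l2_mul_integrable (hfi i) hg
    refine Integrable.mono' (hmul.abs.const_mul (c ^ n))
        (((measurable_const.mul (hwmeas i)).aestronglyMeasurable.mul (hfi i).1).mul hg.1) ?_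
    filter_upwards with x
    have h1 : ‖T i x‖ = |w i x| * |f (x ∘ i.succAbove) * g x| := by
      simp [hT, abs_mul, mul_assoc]
    rw [h1]
    exact mul_le_mul_of_nonneg_right (hwle i x) (abs_nonneg _)
  set F : Fin (n + 1) → X × (Fin n → X) → ℝ := fun i p => T i ((e i).symm p) with hF
  have hptw : ∀ (i : Fin (n + 1)) (t : X) (y : Fin n → X),
      F i (t, y) = f y * ((-1 : ℝ) ^ (i : ℕ) *
        ((∏ j, Real.sqrt (K t (y j))) * g (i.insertNth t y))) := by
    intro i t y
    have hsymm : (e i).symm (t, y) = i.insertNth t y := by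
      simp [he, MeasurableEquiv.piFinSuccAbove, Fin.insertNthEquiv]
    have hcompy : (i.insertNth t y : Fin (n + 1) → X) ∘ i.succAbove = y := by
      funext j; simp
    have hwval : w i (i.insertNth t y) = ∏ j, Real.sqrt (K t (y j)) := by
      show (∏ j ∈ Finset.univ.erase i,
          Real.sqrt (K ((i.insertNth t y : Fin (n + 1) → X) i)
            ((i.insertNth t y : Fin (n + 1) → X) j))) = _
      rw [prod_erase_succAbove i
        (fun j => Real.sqrt (K ((i.insertNth t y : Fin (n + 1) → X) i)
          ((i.insertNth t y : Fin (n + 1) → X) j)))]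
      simp
    show (-1 : ℝ) ^ (i : ℕ) * w i ((e i).symm (t, y)) *
        f (((e i).symm (t, y)) ∘ i.succAbove) * g ((e i).symm (t, y)) = _
    rw [hsymm, hcompy, hwval]
    ring
  have hFint : ∀ i, Integrable (F i) (μ.prod μn) := by
    intro i
    have := ((mp i).symm (e i)).integrable_comp_emb (e i).symm.measurableEmbedding
      (g := T i)
    exact this.mpr (hTint i)
  have key : ∀ i : Fin (n + 1), ∫ x, T i x ∂μn1 =
      ∫ y, f y * ((-1 : ℝ) ^ (i : ℕ) *
        ∫ t, (∏ j, Real.sqrt (K t (y j))) * g (i.insertNth t y) ∂μ) ∂μn := by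
    intro i
    have h1 : ∫ x, T i x ∂μn1 = ∫ p, F i p ∂(μ.prod μn) :=
      (((mp i).symm (e i)).integral_comp' (T i)).symm
    rw [h1, integral_prod_symm _ (hFint i)]
    refine congrArg (fun h : (Fin n → X) → ℝ => ∫ y, h y ∂μn) (funext fun y => ?_)
    simp only [hptw i _ y]
    rw [integral_const_mul, integral_const_mul]
  -- integrability of the RHS summands
  have hG : ∀ i : Fin (n + 1), Integrable (fun y => f y * ((-1 : ℝ) ^ (i : ℕ) *
      ∫ t, (∏ j, Real.sqrt (K t (y j))) * g (i.insertNth t y) ∂μ)) μn := by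
    intro i
    refine ((hFint i).integral_prod_right).congr (Filter.Eventually.of_forall fun y => ?_)
    simp only [hptw i _ y]
    rw [integral_const_mul, integral_const_mul]
  calc ∫ x, (∑ i : Fin (n + 1), (-1 : ℝ) ^ (i : ℕ) *
        (∏ j ∈ Finset.univ.erase i, Real.sqrt (K (x i) (x j))) * f (x ∘ i.succAbove))
          * g x ∂μn1
      = ∫ x, ∑ i : Fin (n + 1), T i x ∂μn1 := by
        refine congrArg (fun h : (Fin (n+1) → X) → ℝ => ∫ x, h x ∂μn1) (funext fun x => ?_)
        rw [Finset.sum_mul]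
    _ = ∑ i : Fin (n + 1), ∫ x, T i x ∂μn1 :=
        integral_finset_sum _ fun i _ => hTint i
    _ = ∑ i : Fin (n + 1), ∫ y, f y * ((-1 : ℝ) ^ (i : ℕ) *
        ∫ t, (∏ j, Real.sqrt (K t (y j))) * g (i.insertNth t y) ∂μ) ∂μn := by
        exact Finset.sum_congr rfl fun i _ => key i
    _ = ∫ y, ∑ i : Fin (n + 1), f y * ((-1 : ℝ) ^ (i : ℕ) *
        ∫ t, (∏ j, Real.sqrt (K t (y j))) * g (i.insertNth t y) ∂μ) ∂μn :=
        (integral_finset_sum _ fun i _ => hG i).symm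
    _ = ∫ x, f x * (∑ i : Fin (n + 1), (-1 : ℝ) ^ (i : ℕ) *
        ∫ t, (∏ j, Real.sqrt (K t (x j))) * g (i.insertNth t x) ∂μ) ∂μn := by
        refine congrArg (fun h : (Fin n → X) → ℝ => ∫ x, h x ∂μn) (funext fun x => ?_)
        rw [Finset.mul_sum]
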